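/- Let α ≤ 1, α ≠ 0, and suppose that for every bounded interval I there exists C > 0 such that for all Dirichlet polynomials F(s) = ∑_{n=1}^N a_n n^{-s} (with a_n/√w_n square-summable), the local embedding ∫_{(1/2,1]×I} |F(s)|² (σ−1/2)^{−α−1} dm(s) ≤ C ∑ |a_n|²/w_n holds (case α < 0). Then there exists C' such that ∑_{n ∈ (e^k, e^{k+1})} w_n ≤ C'·e^k·k^{-α} for all k ≥ 1, by testing the embedding on the functions g_k(s) = ∑_{n ∈ (e^k, e^{k+1})} w_n n^{-s}. -/

import Mathlib

open Finset Real MeasureTheory Complex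

private lemma aux_cpow {n : ℕ} (hn : 1 ≤ n) (z : ℂ) :
    (n : ℂ) ^ z = Complex.exp (z * (Real.log n : ℂ)) := by
  have h0 : (n : ℂ) ≠ 0 := Nat.cast_ne_zero.mpr (by omega)
  rw [Complex.cpow_def_of_ne_zero h0, ← Complex.ofReal_natCast,
    ← Complex.ofReal_log (Nat.cast_nonneg n), mul_comm]

private lemma aux_norm_cpow {n : ℕ} (hn : 1 ≤ n) (σ t : ℝ) :
    ‖(n : ℂ) ^ (-((σ : ℂ) + (t : ℂ) * Complex.I))‖ = Real.exp (-(σ * Real.log n)) := by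
  rw [aux_cpow hn, Complex.norm_exp,
    show (-((σ:ℂ)+(t:ℂ)*Complex.I) * (Real.log n : ℂ))
      = Complex.ofReal (-(σ * Real.log n)) + Complex.ofReal (-(t * Real.log n)) * Complex.I by
        push_cast; ring]
  simp [Complex.log_re, Complex.log_im, Complex.norm_natCast, Complex.natCast_arg]

private lemma aux_term_re (wn σ t θ L : ℝ) :
    (Complex.exp (Complex.I * (t * θ)) *
      ((wn : ℂ) * Complex.exp (-((σ : ℂ) + (t : ℂ) * Complex.I) * (L : ℂ)))).re
      = wn * (Real.exp (-(σ * L)) * Real.cos (t * (θ - L))) := by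
  rw [mul_left_comm, ← Complex.exp_add,
    show (Complex.I * ((t:ℝ) * (θ:ℝ)) + -((σ:ℂ)+(t:ℂ)*Complex.I) * (L:ℂ))
      = Complex.ofReal (-(σ * L)) + Complex.ofReal (t * (θ - L)) * Complex.I by
        push_cast; ring,
    Complex.re_ofReal_mul, Complex.exp_re]
  simp

set_option maxHeartbeats 2000000 in
theorem stmt_19 (w : ℕ → ℝ) (hw : ∀ n, 0 ≤ w n) (α : ℝ) (hα : α < 0)
    (hembed : ∀ a b : ℝ, a < b → ∃ C : ℝ, 0 < C ∧ ∀ (N : ℕ) (c : ℕ → ℂ),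
      (∫ σ in Set.Ioc (1/2 : ℝ) 1, ∫ t in Set.Ioo a b,
          ‖∑ n ∈ Finset.Icc 1 N, c n * ((n : ℂ) ^ (-((σ : ℂ) + (t : ℂ) * Complex.I)))‖ ^ 2
            * (σ - 1/2) ^ (-α - 1))
        ≤ C * ∑ n ∈ Finset.Icc 1 N, ‖c n‖ ^ 2 / w n) :
    ∃ C' : ℝ, 0 < C' ∧ ∀ k : ℕ, 1 ≤ k →
      ∑ n ∈ (Finset.range (⌊Real.exp (k + 1)⌋₊ + 1)).filter
          (fun n : ℕ => Real.exp k < (n : ℝ) ∧ (n : ℝ) < Real.exp (k + 1)), w n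
        ≤ C' * Real.exp k * (k : ℝ) ^ (-α) := by
  classical
  obtain ⟨C, hC, hbd⟩ := hembed (-(1/2)) (1/2) (by norm_num)
  have hπ := Real.pi_gt_three
  have hc₀ : (0:ℝ) < Real.cos (1/4) :=
    Real.cos_pos_of_mem_Ioo ⟨by linarith, by linarith⟩
  set c₀ : ℝ := Real.cos (1/4) with hc₀def
  set μ₀ : ℝ := min ((2:ℝ) ^ (α + 1)) 1 with hμ₀def
  have hμ₀ : 0 < μ₀ := lt_min (Real.rpow_pos_of_pos two_pos _) one_pos
  set C' : ℝ := C * 2 * Real.exp 2 * (4:ℝ) ^ (-α) / (μ₀ * c₀ ^ 2) with hC'def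
  have hC' : 0 < C' := by positivity
  refine ⟨C', hC', ?_⟩
  intro k hk
  have hk1 : (1:ℝ) ≤ (k:ℝ) := by exact_mod_cast hk
  set N : ℕ := ⌊Real.exp ((k:ℝ) + 1)⌋₊ with hN
  set P : ℕ → Prop := fun n => Real.exp k < (n:ℝ) ∧ (n:ℝ) < Real.exp ((k:ℝ) + 1) with hP
  set c : ℕ → ℂ := fun n => if P n then ((w n : ℝ) : ℂ) else 0 with hc
  set η : ℝ := 1/(2*((k:ℝ)+1)) with hηdef
  have hηpos : 0 < η := by positivity
  have hη4 : η ≤ 1/4 := by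
    rw [hηdef, div_le_div_iff₀ (by positivity) (by norm_num)]
    linarith
  set θ : ℝ := (k:ℝ) + 1/2 with hθdef
  set E : ℝ := Real.exp (-(((k:ℝ)+2)/2)) with hEdef
  have hEpos : 0 < E := Real.exp_pos _
  -- the block sum
  set S : ℝ := ∑ n ∈ (Finset.range (N+1)).filter P, w n with hSdef
  have hSnonneg : 0 ≤ S := Finset.sum_nonneg fun n _ => hw n
  -- rewrite the filtered sum as over `Icc 1 N`
  have hfilter : (Finset.range (N+1)).filter P = (Finset.Icc 1 N).filter P := by
    ext n
    simp only [Finset.mem_filter, Finset.mem_range, Finset.mem_Icc]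
    constructor
    · rintro ⟨h1, h2⟩
      refine ⟨⟨?_, by omega⟩, h2⟩
      rcases Nat.eq_zero_or_pos n with h | h
      · exfalso
        have := h2.1
        rw [h] at this
        simp at this
        exact absurd this (not_lt.mpr (Real.exp_pos _).le)
      · exact h
    · rintro ⟨⟨h1, h2⟩, h3⟩
      exact ⟨by omega, h3⟩
  -- the ℋ_w norm of the test function equals S
  have hRHS : ∑ n ∈ Finset.Icc 1 N, ‖c n‖ ^ 2 / w n = S := by
    rw [hSdef, hfilter, Finset.sum_filter]
    refine Finset.sum_congr rfl fun n _ => ?_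
    by_cases h : P n
    · simp only [hc, if_pos h]
      rcases eq_or_lt_of_le (hw n) with h0 | h0
      · simp [← h0]
      · rw [Complex.norm_real, Real.norm_eq_abs, _root_.abs_of_nonneg (hw n), sq, mul_div_assoc,
          div_self (ne_of_gt h0), mul_one]
        exact (if_pos h).symm
    · simp [hc, if_neg h, h]
      exact fun h1 h2 => absurd ⟨h1, h2⟩ h
  have hEmb := hbd N c
  rw [hRHS] at hEmb
  set G : ℝ → ℝ → ℂ := fun σ t =>
    ∑ n ∈ Finset.Icc 1 N, c n * ((n : ℂ) ^ (-((σ : ℂ) + (t : ℂ) * Complex.I))) with hG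
  have hEmb2 : (∫ σ in Set.Ioc (1/2 : ℝ) 1, ∫ t in Set.Ioo (-(1/2) : ℝ) (1/2),
      ‖G σ t‖ ^ 2 * (σ - 1/2) ^ (-α - 1)) ≤ C * S := by
    simp only [hG]
    exact hEmb
  -- key pointwise lower bound on the Dirichlet polynomial
  have hKey : ∀ σ ∈ Set.Ioc (1/2 + η/2) (1/2 + η), ∀ t ∈ Set.Ioo (-(1/2) : ℝ) (1/2),
      c₀ * E * S ≤ ‖G σ t‖ := by
    intro σ hσ t ht
    have hσ1 : (1:ℝ)/2 < σ := by
      have := hσ.1; linarith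
    have hσ2 : σ ≤ 1/2 + η := hσ.2
    have h1 : c₀ * E * S ≤ (Complex.exp (Complex.I * (t * θ)) * G σ t).re := by
      have hre : (Complex.exp (Complex.I * (t * θ)) * G σ t).re
          = ∑ n ∈ Finset.Icc 1 N,
              (Complex.exp (Complex.I * (t * θ))
                * (c n * ((n : ℂ) ^ (-((σ : ℂ) + (t : ℂ) * Complex.I))))).re := by
        rw [hG]
        simp only
        rw [Finset.mul_sum, Complex.re_sum]
      have hlhs : c₀ * E * S = ∑ n ∈ Finset.Icc 1 N, (if P n then c₀ * E * w n else 0) := by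
        rw [hSdef, hfilter, Finset.sum_filter, Finset.mul_sum]
        refine Finset.sum_congr rfl fun n _ => ?_
        split_ifs with h1
        · rfl
        · rw [mul_zero]
      rw [hre, hlhs]
      refine Finset.sum_le_sum fun n hn => ?_
      have hn1 : 1 ≤ n := (Finset.mem_Icc.mp hn).1
      by_cases hPn : P n
      · rw [if_pos hPn]
        have hcn : c n = ((w n : ℝ) : ℂ) := by rw [hc]; simp only [if_pos hPn]
        rw [hcn, aux_cpow hn1, aux_term_re]
        have hn0 : (0:ℝ) < (n:ℝ) := by exact_mod_cast hn1
        have hL1 : (k:ℝ) < Real.log n := (Real.lt_log_iff_exp_lt hn0).mpr hPn.1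
        have hL2 : Real.log n < (k:ℝ) + 1 := (Real.log_lt_iff_lt_exp hn0).mpr hPn.2
        have hLpos : (0:ℝ) < Real.log n := by linarith
        have hexp : E ≤ Real.exp (-(σ * Real.log n)) := by
          apply Real.exp_le_exp.mpr
          rw [neg_le_neg_iff]
          have hm : σ * Real.log n ≤ (1/2 + η) * ((k:ℝ)+1) :=
            mul_le_mul hσ2 hL2.le hLpos.le (by linarith [hηpos])
          have he : (1/2 + η) * ((k:ℝ)+1) = ((k:ℝ)+2)/2 := by
            rw [hηdef]; field_simp; ring
          linarith
        have hcos : c₀ ≤ Real.cos (t * (θ - Real.log n)) := by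
          rw [← Real.cos_abs, hc₀def]
          apply Real.cos_le_cos_of_nonneg_of_le_pi (abs_nonneg _) (by linarith)
          rw [abs_mul]
          have hta : |t| ≤ 1/2 := by
            rw [abs_le]; exact ⟨by linarith [ht.1], by linarith [ht.2]⟩
          have hLa : |θ - Real.log n| ≤ 1/2 := by
            rw [abs_le, hθdef]; constructor <;> [linarith; linarith]
          calc |t| * |θ - Real.log n| ≤ (1/2) * (1/2) :=
                mul_le_mul hta hLa (abs_nonneg _) (by norm_num)
            _ ≤ 1/4 := by norm_num
        have hmm : E * c₀ ≤ Real.exp (-(σ * Real.log n)) * Real.cos (t * (θ - Real.log n)) :=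
          mul_le_mul hexp hcos hc₀.le (Real.exp_pos _).le
        have := mul_le_mul_of_nonneg_left hmm (hw n)
        nlinarith [hw n]
      · rw [if_neg hPn]
        have hcn : c n = 0 := by rw [hc]; simp only [if_neg hPn]
        rw [hcn]
        simp
    have h2 : (Complex.exp (Complex.I * (t * θ)) * G σ t).re ≤ ‖G σ t‖ := by
      calc (Complex.exp (Complex.I * (t * θ)) * G σ t).re
          ≤ ‖Complex.exp (Complex.I * (t * θ)) * G σ t‖ := Complex.re_le_norm _
        _ = ‖G σ t‖ := by
            rw [norm_mul, Complex.norm_exp]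
            have : (Complex.I * ((t:ℝ) * (θ:ℝ))).re = 0 := by simp
            rw [this, Real.exp_zero, one_mul]
    linarith
  -- continuity facts
  have hGcont_t : ∀ σ : ℝ, Continuous fun t : ℝ => G σ t := by
    intro σ
    rw [hG]
    refine continuous_finset_sum _ fun n hn => ?_
    have hn0 : (n : ℂ) ≠ 0 :=
      Nat.cast_ne_zero.mpr (by have := (Finset.mem_Icc.mp hn).1; omega)
    exact continuous_const.mul
      (((continuous_const.add (Complex.continuous_ofReal.mul continuous_const)).neg).const_cpow
        (Or.inl hn0))
  have hGcont_σ : ∀ t : ℝ, Continuous fun σ : ℝ => G σ t := by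
    intro t
    rw [hG]
    refine continuous_finset_sum _ fun n hn => ?_
    have hn0 : (n : ℂ) ≠ 0 :=
      Nat.cast_ne_zero.mpr (by have := (Finset.mem_Icc.mp hn).1; omega)
    exact continuous_const.mul
      (((Complex.continuous_ofReal.add continuous_const).neg).const_cpow (Or.inl hn0))
  -- uniform bound on the polynomial for σ > 0
  set M : ℝ := (∑ n ∈ Finset.Icc 1 N, ‖c n‖) ^ 2 with hMdef
  have hGbound : ∀ σ t : ℝ, 0 < σ → ‖G σ t‖ ^ 2 ≤ M := by
    intro σ t hσ0
    rw [hMdef]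
    have h1 : ‖G σ t‖ ≤ ∑ n ∈ Finset.Icc 1 N, ‖c n‖ := by
      rw [hG]
      simp only
      refine (norm_sum_le _ _).trans (Finset.sum_le_sum fun n hn => ?_)
      have hn1 : 1 ≤ n := (Finset.mem_Icc.mp hn).1
      rw [norm_mul, aux_norm_cpow hn1]
      have hlog : (0:ℝ) ≤ Real.log n := Real.log_nonneg (by exact_mod_cast hn1)
      have : Real.exp (-(σ * Real.log n)) ≤ 1 := by
        rw [Real.exp_le_one_iff]
        nlinarith
      exact mul_le_of_le_one_right (norm_nonneg _) this
    exact pow_le_pow_left₀ (norm_nonneg _) h1 2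
  have hMnonneg : 0 ≤ M := by rw [hMdef]; positivity
  -- the inner integrand and inner integral
  have hvolIoo : (volume (Set.Ioo (-(1/2) : ℝ) (1/2))).toReal = 1 := by
    rw [Real.volume_Ioo]
    norm_num
  have hvolIoo' : volume (Set.Ioo (-(1/2) : ℝ) (1/2)) < ⊤ := by
    rw [Real.volume_Ioo]
    exact ENNReal.ofReal_lt_top
  set I : ℝ → ℝ := fun σ => ∫ t in Set.Ioo (-(1/2) : ℝ) (1/2),
    ‖G σ t‖ ^ 2 * (σ - 1/2) ^ (-α - 1) with hIdef
  have hIprod : ∀ σ : ℝ, I σ = (∫ t in Set.Ioo (-(1/2) : ℝ) (1/2), ‖G σ t‖ ^ 2)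
      * (σ - 1/2) ^ (-α - 1) := by
    intro σ
    rw [hIdef]
    exact integral_mul_const _ _
  -- continuity of the inner integral (without the weight) on σ > 0
  have hJcont : ContinuousOn (fun σ => ∫ t in Set.Ioo (-(1/2) : ℝ) (1/2), ‖G σ t‖ ^ 2)
      (Set.Ioi (0:ℝ)) := by
    refine continuousOn_of_dominated (bound := fun _ => M)
      (fun σ _ => (((hGcont_t σ).norm.pow 2)).aestronglyMeasurable) ?_ ?_ ?_
    · intro σ hσ
      refine Filter.Eventually.of_forall fun t => ?_
      rw [Real.norm_eq_abs, _root_.abs_of_nonneg (by positivity)]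
      exact hGbound σ t hσ
    · exact integrableOn_const hvolIoo'.ne
    · exact Filter.Eventually.of_forall fun t => ((hGcont_σ t).norm.pow 2).continuousOn
  have hrpowcont : ContinuousOn (fun σ : ℝ => (σ - 1/2) ^ (-α - 1)) (Set.Ioc (1/2:ℝ) 1) := by
    intro σ hσ
    refine ContinuousAt.continuousWithinAt ?_
    refine ContinuousAt.rpow_const ((continuous_id.sub continuous_const).continuousAt)
      (Or.inl ?_)
    have := hσ.1
    intro h'
    rw [sub_eq_zero] at h'
    rw [h'] at this
    linarith
  have hIcont : ContinuousOn I (Set.Ioc (1/2:ℝ) 1) := by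
    refine ContinuousOn.congr (((hJcont.mono ?_).mul hrpowcont)) fun σ _ => hIprod σ
    intro σ hσ
    have := hσ.1
    simp only [Set.mem_Ioi]
    linarith
  have hImeas : AEStronglyMeasurable I (volume.restrict (Set.Ioc (1/2:ℝ) 1)) :=
    hIcont.aestronglyMeasurable measurableSet_Ioc
  -- integrable dominating function
  have hdom : IntegrableOn (fun σ => M * (σ - 1/2) ^ (-α - 1)) (Set.Ioc (1/2:ℝ) 1) volume := by
    have h1 : IntervalIntegrable (fun x : ℝ => x ^ (-α - 1)) volume 0 (1/2) :=
      intervalIntegral.intervalIntegrable_rpow' (by linarith)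
    have h2 := h1.comp_sub_right (1/2)
    rw [show (0:ℝ) + 1/2 = 1/2 by norm_num, show (1/2:ℝ) + 1/2 = 1 by norm_num] at h2
    have h3 := (intervalIntegrable_iff_integrableOn_Ioc_of_le (by norm_num : (1/2:ℝ) ≤ 1)).mp h2
    exact h3.const_mul M
  have hIbound : ∀ σ ∈ Set.Ioc (1/2:ℝ) 1, ‖I σ‖ ≤ M * (σ - 1/2) ^ (-α - 1) := by
    intro σ hσ
    have h4 : (0:ℝ) ≤ (σ - 1/2) ^ (-α - 1) := Real.rpow_nonneg (by have := hσ.1; linarith) _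
    rw [hIprod σ, norm_mul, Real.norm_eq_abs ((σ - 1/2) ^ (-α - 1)), _root_.abs_of_nonneg h4]
    refine mul_le_mul_of_nonneg_right ?_ h4
    have h5 : ‖∫ t in Set.Ioo (-(1/2) : ℝ) (1/2), ‖G σ t‖ ^ 2‖
        ≤ M * (volume (Set.Ioo (-(1/2) : ℝ) (1/2))).toReal := by
      refine norm_setIntegral_le_of_norm_le_const hvolIoo' (fun t _ => ?_)
      · rw [Real.norm_eq_abs, _root_.abs_of_nonneg (by positivity)]
        exact hGbound σ t (by have := hσ.1; linarith)
    rw [hvolIoo, mul_one] at h5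
    exact h5
  have hIint : IntegrableOn I (Set.Ioc (1/2:ℝ) 1) :=
    Integrable.mono' hdom hImeas
      ((ae_restrict_iff' measurableSet_Ioc).mpr (Filter.Eventually.of_forall hIbound))
  have hInonneg : ∀ σ ∈ Set.Ioc (1/2:ℝ) 1, 0 ≤ I σ := by
    intro σ hσ
    rw [hIdef]
    refine setIntegral_nonneg measurableSet_Ioo fun t _ => ?_
    exact mul_nonneg (by positivity) (Real.rpow_nonneg (by have := hσ.1; linarith) _)
  -- lower bound for I on the small interval
  have hIlow : ∀ σ ∈ Set.Ioc (1/2 + η/2) (1/2 + η),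
      (c₀*E*S)^2 * (η ^ (-α - 1) * μ₀) ≤ I σ := by
    intro σ hσ
    have hσhalf : 1/2 < σ := by have := hσ.1; linarith
    have hrlow : η ^ (-α - 1) * μ₀ ≤ (σ - 1/2) ^ (-α - 1) := by
      rcases le_or_gt 0 (-α - 1) with hp0 | hp0
      · have h1 : ((η/2):ℝ) ^ (-α - 1) ≤ (σ - 1/2) ^ (-α - 1) :=
          Real.rpow_le_rpow (by positivity) (by have := hσ.1; linarith) hp0
        have e1 : ((η/2):ℝ) ^ (-α - 1) = η ^ (-α - 1) * (2:ℝ) ^ (α + 1) := by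
          rw [Real.div_rpow hηpos.le (by norm_num), show (α + 1 : ℝ) = -(-α - 1) by ring,
            Real.rpow_neg (by norm_num : (0:ℝ) ≤ 2), div_eq_mul_inv]
        have h2 : η ^ (-α - 1) * μ₀ ≤ (η/2) ^ (-α - 1) := by
          rw [e1, hμ₀def]
          exact mul_le_mul_of_nonneg_left (min_le_left _ _) (Real.rpow_nonneg hηpos.le _)
        linarith
      · have h1 : η ^ (-α - 1) ≤ (σ - 1/2) ^ (-α - 1) :=
          Real.rpow_le_rpow_of_nonpos (by linarith)
            (by have := hσ.2; linarith) hp0.le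
        have h2 : η ^ (-α - 1) * μ₀ ≤ η ^ (-α - 1) :=
          mul_le_of_le_one_right (Real.rpow_nonneg hηpos.le _) (min_le_right _ _)
        linarith
    have hint : IntegrableOn (fun t => ‖G σ t‖ ^ 2 * (σ - 1/2) ^ (-α - 1))
        (Set.Ioo (-(1/2) : ℝ) (1/2)) volume :=
      ((((hGcont_t σ).norm.pow 2).mul continuous_const).integrableOn_Icc).mono_set
        Set.Ioo_subset_Icc_self
    have h6 : ((c₀*E*S)^2 * (σ - 1/2) ^ (-α - 1))
          * (volume (Set.Ioo (-(1/2) : ℝ) (1/2))).toReal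
        ≤ ∫ t in Set.Ioo (-(1/2) : ℝ) (1/2), ‖G σ t‖ ^ 2 * (σ - 1/2) ^ (-α - 1) := by
      refine setIntegral_ge_of_const_le_real measurableSet_Ioo (ne_of_lt hvolIoo')
        (fun t ht => ?_) hint
      refine mul_le_mul_of_nonneg_right ?_ (Real.rpow_nonneg (by linarith) _)
      exact pow_le_pow_left₀ (by positivity) (hKey σ hσ t ht) 2
    rw [hvolIoo, mul_one] at h6
    calc (c₀*E*S)^2 * (η ^ (-α - 1) * μ₀)
        ≤ (c₀*E*S)^2 * (σ - 1/2) ^ (-α - 1) :=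
          mul_le_mul_of_nonneg_left hrlow (by positivity)
      _ ≤ I σ := by rw [hIdef]; exact h6
  -- assemble the chain of integral bounds
  have hsub : Set.Ioc (1/2 + η/2) (1/2 + η) ⊆ Set.Ioc (1/2:ℝ) 1 :=
    Set.Ioc_subset_Ioc (by linarith) (by linarith)
  have hvol2 : (volume (Set.Ioc (1/2 + η/2) (1/2 + η))).toReal = η/2 := by
    rw [Real.volume_Ioc, ENNReal.toReal_ofReal (by linarith)]
    ring
  have h7 : (c₀*E*S)^2 * (η ^ (-α - 1) * μ₀) * (η/2)
      ≤ ∫ σ in Set.Ioc (1/2 + η/2) (1/2 + η), I σ := by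
    conv_lhs => rw [← hvol2]
    exact setIntegral_ge_of_const_le_real measurableSet_Ioc (ne_of_lt measure_Ioc_lt_top)
      hIlow (hIint.mono_set hsub)
  have h8 : (∫ σ in Set.Ioc (1/2 + η/2) (1/2 + η), I σ) ≤ ∫ σ in Set.Ioc (1/2:ℝ) 1, I σ := by
    refine setIntegral_mono_set hIint ?_ (HasSubset.Subset.eventuallyLE hsub)
    exact (ae_restrict_iff' measurableSet_Ioc).mpr (Filter.Eventually.of_forall hInonneg)
  have h9 : (∫ σ in Set.Ioc (1/2:ℝ) 1, I σ) ≤ C * S := by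
    refine le_trans (le_of_eq ?_) hEmb2
    simp only [hIdef]
  have hfinal : (c₀*E*S)^2 * (η ^ (-α - 1) * μ₀) * (η/2) ≤ C * S :=
    le_trans h7 (le_trans h8 h9)
  -- final arithmetic
  have hKpos : 0 < (c₀*E)^2 * (η ^ (-α - 1) * μ₀) * (η/2) :=
    mul_pos (mul_pos (pow_pos (mul_pos hc₀ hEpos) 2)
      (mul_pos (Real.rpow_pos_of_pos hηpos _) hμ₀)) (by linarith)
  rcases eq_or_lt_of_le hSnonneg with hS0 | hS0
  · rw [← hS0]
    positivity
  · have hKS : (((c₀*E)^2 * (η ^ (-α - 1) * μ₀) * (η/2)) * S) * S ≤ C * S := by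
      calc (((c₀*E)^2 * (η ^ (-α - 1) * μ₀) * (η/2)) * S) * S
          = (c₀*E*S)^2 * (η ^ (-α - 1) * μ₀) * (η/2) := by ring
        _ ≤ C * S := hfinal
    have hKS2 : ((c₀*E)^2 * (η ^ (-α - 1) * μ₀) * (η/2)) * S ≤ C :=
      le_of_mul_le_mul_right hKS hS0
    have hSle : S ≤ C / ((c₀*E)^2 * (η ^ (-α - 1) * μ₀) * (η/2)) :=
      (le_div_iff₀ hKpos).mpr (by linarith [mul_comm S ((c₀*E)^2 * (η ^ (-α - 1) * μ₀) * (η/2))])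
    refine hSle.trans ?_
    rw [div_le_iff₀ hKpos]
    -- relations between the constants
    have hxy : η ^ (-α - 1) * η = η ^ (-α) := by
      nth_rewrite 2 [← Real.rpow_one η]
      rw [← Real.rpow_add hηpos]
      congr 1
      ring
    have hB : Real.exp 2 * Real.exp (k:ℝ) * E^2 = 1 := by
      rw [hEdef, sq, ← Real.exp_add, ← Real.exp_add, ← Real.exp_add,
        show (2 + (k:ℝ) + (-(((k:ℝ)+2)/2) + -(((k:ℝ)+2)/2))) = 0 by ring, Real.exp_zero]
    have hD : (1:ℝ) ≤ (4:ℝ) ^ (-α) * (k:ℝ) ^ (-α) * η ^ (-α) := by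
      rw [← Real.mul_rpow (by norm_num) (Nat.cast_nonneg k),
        ← Real.mul_rpow (by positivity) hηpos.le]
      refine Real.one_le_rpow ?_ (by linarith)
      have e2 : 4 * (k:ℝ) * η = (4 * (k:ℝ)) / (2 * ((k:ℝ) + 1)) := by
        rw [hηdef]; ring
      rw [e2, le_div_iff₀ (by positivity)]
      linarith
    have e5 : C' * Real.exp (k:ℝ) * (k:ℝ) ^ (-α) * ((c₀*E)^2 * (η ^ (-α - 1) * μ₀) * (η/2))
        = C * ((4:ℝ) ^ (-α) * (k:ℝ) ^ (-α) * η ^ (-α)) := by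
      rw [hC'def, div_mul_eq_mul_div, div_mul_eq_mul_div, div_mul_eq_mul_div,
        div_eq_iff (ne_of_gt (mul_pos hμ₀ (pow_pos hc₀ 2)))]
      linear_combination
        (C * ((4:ℝ) ^ (-α)) * ((k:ℝ) ^ (-α)) * μ₀ * c₀^2 * (η ^ (-α - 1)) * η) * hB
        + (C * ((4:ℝ) ^ (-α)) * ((k:ℝ) ^ (-α)) * μ₀ * c₀^2) * hxy
    calc C = C * 1 := by ring
      _ ≤ C * ((4:ℝ) ^ (-α) * (k:ℝ) ^ (-α) * η ^ (-α)) :=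
          mul_le_mul_of_nonneg_left hD hC.le
      _ = C' * Real.exp (k:ℝ) * (k:ℝ) ^ (-α) * ((c₀*E)^2 * (η ^ (-α - 1) * μ₀) * (η/2)) :=
          e5.symm
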